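/- arXiv:2008.03027 — 4 statements merged into one kernel-verified Lean document; each statement's English description precedes it below -/
import Mathlib

section
/- Let r be a natural number and let G be a finite simple graph such that for every vertex v the punctured ball at v (for parameter r) is connected. Then the subspace S_r is locally connected; that is, for every vertex v of G and every nonempty proper subset X of the set of edges of G incident with v, there exists a cycle of G of length at most r whose edge set meets X in an odd number of edges (so the characteristic vector of X is not orthogonal to every element of S_r). -/
open SimpleGraph

/-- The ball of radius `r/2` around `v`: vertices at distance at most `⌊r/2⌋` from `v`,
with all edges of `G` between such vertices except, when `r` is even, edges joining two
vertices both at distance exactly `r/2` from `v`. -/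
def ballSubgraph {V : Type*} (G : SimpleGraph V) (r : ℕ) (v : V) : G.Subgraph where
  verts := {w | G.Reachable v w ∧ G.dist v w ≤ r / 2}
  Adj x y := G.Adj x y ∧ (G.Reachable v x ∧ G.dist v x ≤ r / 2) ∧
      (G.Reachable v y ∧ G.dist v y ≤ r / 2) ∧
      ¬(Even r ∧ 2 * G.dist v x = r ∧ 2 * G.dist v y = r)
  adj_sub h := h.1
  edge_vert h := h.2.1
  symm := by
    refine ⟨fun x y h => ?_⟩
    exact ⟨h.1.symm, h.2.2.1, h.2.1, by tauto⟩

/-- The punctured ball at `v` for parameter `r`: the ball `B_{r/2}(v)` with `v` deleted. -/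
def puncturedBall {V : Type*} (G : SimpleGraph V) (r : ℕ) (v : V) : G.Subgraph :=
  (ballSubgraph G r v).deleteVerts {v}

private lemma card_inter_toFinset {α : Type*} [DecidableEq α] (X : Finset α) :
    ∀ (l : List α), l.Nodup → (X ∩ l.toFinset).card = l.countP (· ∈ X) := by
  intro l
  induction l with
  | nil => simp
  | cons a l ih =>
    intro hnd
    rw [List.nodup_cons] at hnd
    rw [List.countP_cons, ← ih hnd.2]
    by_cases ha : a ∈ X
    · have : X ∩ (a :: l).toFinset = insert a (X ∩ l.toFinset) := by
        ext b
        simp only [Finset.mem_inter, List.toFinset_cons, Finset.mem_insert, List.mem_toFinset]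
        constructor
        · rintro ⟨hb, rfl | hb2⟩
          · exact Or.inl rfl
          · exact Or.inr ⟨hb, by simpa using hb2⟩
        · rintro (rfl | ⟨hb, hb2⟩)
          · exact ⟨ha, Or.inl rfl⟩
          · exact ⟨hb, Or.inr (by simpa using hb2)⟩
      rw [this, Finset.card_insert_of_notMem (by simp [hnd.1]), if_pos (by simpa using ha)]
    · have : X ∩ (a :: l).toFinset = X ∩ l.toFinset := by
        ext b
        simp only [Finset.mem_inter, List.toFinset_cons, Finset.mem_insert, List.mem_toFinset]
        constructor
        · rintro ⟨hb, rfl | hb2⟩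
          · exact absurd hb ha
          · exact ⟨hb, by simpa using hb2⟩
        · rintro ⟨hb, hb2⟩
          exact ⟨hb, Or.inr (by simpa using hb2)⟩
      rw [this, if_neg (by simpa using ha), add_zero]

private lemma exists_cycle_aux {V : Type*} [DecidableEq V] {G : SimpleGraph V}
    (r : ℕ) (X : Finset (Sym2 V)) :
    ∀ (n : ℕ) (u : V) (W : G.Walk u u), W.length = n → W.length ≤ r →
      Odd (W.edges.countP (· ∈ X)) →
      ∃ (u' : V) (c : G.Walk u' u'), c.IsCycle ∧ c.length ≤ r ∧
        Odd (X ∩ c.edges.toFinset).card := by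
  intro n
  induction n using Nat.strong_induction_on with
  | _ n ih =>
  intro u W hWn hWr hodd
  by_cases hnd : W.support.tail.Nodup
  · -- tail nodup case
    by_cases htr : W.IsTrail
    · -- it's a cycle
      have hne : W ≠ SimpleGraph.Walk.nil := by
        intro h
        subst h
        simp at hodd
      refine ⟨u, W, (SimpleGraph.Walk.isCycle_def W).mpr ⟨htr, hne, hnd⟩, hWr, ?_⟩
      rwa [card_inter_toFinset X W.edges htr.edges_nodup]
    · -- backtrack: contradiction with oddness
      exfalso
      cases W with
      | nil => exact htr (SimpleGraph.Walk.IsTrail.nil)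
      | cons h W₂ =>
        rename_i b
        -- hnd : (cons h W₂).support.tail.Nodup
        rw [SimpleGraph.Walk.support_cons] at hnd
        simp only [List.tail_cons] at hnd
        have hpath : W₂.IsPath := (SimpleGraph.Walk.isPath_def W₂).mpr hnd
        rw [SimpleGraph.Walk.isTrail_cons] at htr
        push_neg at htr
        have hmem : s(u, b) ∈ W₂.edges := htr hpath.isTrail
        -- consider the reverse path from u to b
        have hrev : W₂.reverse.IsPath := hpath.reverse
        have hmemr : s(u, b) ∈ W₂.reverse.edges := by
          rw [SimpleGraph.Walk.edges_reverse, List.mem_reverse]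
          exact hmem
        obtain ⟨c, hadj, p'', hp''⟩ := SimpleGraph.Walk.exists_eq_cons_of_ne h.ne W₂.reverse
        rw [hp''] at hmemr hrev
        rw [SimpleGraph.Walk.edges_cons, List.mem_cons] at hmemr
        have hbc : b = c := by
          rcases hmemr with heq | hmem''
          · rw [Sym2.eq_iff] at heq
            rcases heq with ⟨-, h1⟩ | ⟨h1, h2⟩
            · exact h1
            · exact absurd h1 hadj.ne
          · exfalso
            have : u ∈ p''.support := SimpleGraph.Walk.fst_mem_support_of_mem_edges p'' hmem''
            rw [SimpleGraph.Walk.isPath_def, SimpleGraph.Walk.support_cons, List.nodup_cons] at hrev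
            exact hrev.1 this
        subst hbc
        have hnil : p'' = SimpleGraph.Walk.nil := by
          rw [← SimpleGraph.Walk.isPath_iff_eq_nil]
          exact hrev.of_cons
        subst hnil
        have hW₂ : W₂ = (SimpleGraph.Walk.cons hadj SimpleGraph.Walk.nil).reverse := by
          rw [← hp'', SimpleGraph.Walk.reverse_reverse]
        have hedges : W₂.edges = [s(u, b)] := by
          rw [hW₂, SimpleGraph.Walk.edges_reverse]
          simp [Sym2.eq_swap]
        have : (SimpleGraph.Walk.cons h W₂).edges = [s(u,b), s(u,b)] := by
          rw [SimpleGraph.Walk.edges_cons, hedges]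
        rw [this, Nat.odd_iff] at hodd
        by_cases hx : s(u,b) ∈ X <;> simp [List.countP_cons, hx] at hodd
  · -- duplicate vertex: decompose
    obtain ⟨w, hwcount⟩ : ∃ w, 1 < W.support.tail.count w := by
      by_contra hc
      push_neg at hc
      exact hnd (List.nodup_iff_count_le_one.mpr hc)
    have hwmem : w ∈ W.support := by
      rw [SimpleGraph.Walk.support_eq_cons]
      exact List.mem_cons_of_mem _ (List.count_pos_iff.mp (by omega))
    obtain ⟨W', hlen', hodd', htail⟩ :
        ∃ W' : G.Walk w w, W'.length = W.length ∧ Odd (W'.edges.countP (· ∈ X)) ∧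
          1 < W'.support.tail.count w := by
      refine ⟨W.rotate w hwmem, ?_, ?_, ?_⟩
      · have := (W.rotate_edges w hwmem).perm.length_eq
        rwa [SimpleGraph.Walk.length_edges, SimpleGraph.Walk.length_edges] at this
      · rwa [((W.rotate_edges w hwmem).perm.countP_eq _)]
      · rwa [((W.support_rotate w hwmem).perm.count_eq _)]
    cases W' with
    | nil => simp at htail
    | cons h'' W₃ =>
      rename_i c
      rw [SimpleGraph.Walk.support_cons, List.tail_cons] at htail
      have hw₃ : w ∈ W₃.support := List.count_pos_iff.mp (by omega)
      have hspec := W₃.take_spec hw₃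
      have hcount1 := W₃.count_support_takeUntil_eq_one hw₃
      have hsupp : W₃.support = (W₃.takeUntil w hw₃).support ++ (W₃.dropUntil w hw₃).support.tail := by
        conv_lhs => rw [← hspec]
        exact SimpleGraph.Walk.support_append _ _
      have hDmem : w ∈ (W₃.dropUntil w hw₃).support.tail := by
        have hcnt := congrArg (List.count w) hsupp
        rw [List.count_append] at hcnt
        exact List.count_pos_iff.mp (by omega)
      have hDlen : 0 < (W₃.dropUntil w hw₃).length := by
        by_contra h0
        push_neg at h0
        have : (W₃.dropUntil w hw₃) = SimpleGraph.Walk.nil :=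
          SimpleGraph.Walk.nil_iff_eq_nil.mp (SimpleGraph.Walk.length_eq_zero_iff.mp (by omega))
        rw [this] at hDmem
        simp at hDmem
      rw [SimpleGraph.Walk.length_cons] at hlen'
      have hlensum := congrArg SimpleGraph.Walk.length hspec
      rw [SimpleGraph.Walk.length_append] at hlensum
      have hedges : (SimpleGraph.Walk.cons h'' W₃).edges.countP (· ∈ X) =
          (SimpleGraph.Walk.cons h'' (W₃.takeUntil w hw₃)).edges.countP (· ∈ X) +
          (W₃.dropUntil w hw₃).edges.countP (· ∈ X) := by
        conv_lhs => rw [← hspec]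
        rw [SimpleGraph.Walk.edges_cons, SimpleGraph.Walk.edges_append, List.countP_cons,
          List.countP_append, SimpleGraph.Walk.edges_cons, List.countP_cons]
        ring
      rw [hedges] at hodd'
      have hT1 : (SimpleGraph.Walk.cons h'' (W₃.takeUntil w hw₃)).length
          = (W₃.takeUntil w hw₃).length + 1 := SimpleGraph.Walk.length_cons _ _
      rcases Nat.even_or_odd ((W₃.dropUntil w hw₃).edges.countP (· ∈ X)) with hD | hD
      · exact ih _ (by omega) _ _ rfl (by omega) ((Nat.odd_add.mp hodd').mpr hD)
      · exact ih _ (by omega) _ _ rfl (by omega) hD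

theorem locally_connected_of_no_local_cutvertex
    {V : Type*} [Fintype V] [DecidableEq V] (r : ℕ) (G : SimpleGraph V)
    (hloc : ∀ v : V, (puncturedBall G r v).Connected) :
    ∀ (v : V) (X : Finset (Sym2 V)), ↑X ⊆ G.incidenceSet v → X.Nonempty →
      ↑X ≠ G.incidenceSet v →
      ∃ (u : V) (c : G.Walk u u), c.IsCycle ∧ c.length ≤ r ∧
        Odd (X ∩ c.edges.toFinset).card := by
  intro v X hXsub hXne hXprop
  by_contra hcon
  push_neg at hcon
  have hA : ∀ (u : V) (W : G.Walk u u), W.length ≤ r → ¬ Odd (W.edges.countP (· ∈ X)) := by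
    intro u W hW ho
    obtain ⟨u', c, hc, hcl, hco⟩ := exists_cycle_aux r X W.length u W rfl hW ho
    exact hcon u' c hc hcl hco
  have hr2 : 2 ≤ r := by
    by_contra hr
    push_neg at hr
    obtain ⟨w, hw⟩ := (hloc v).nonempty
    rw [puncturedBall, SimpleGraph.Subgraph.deleteVerts_verts] at hw
    obtain ⟨⟨hreach, hdist⟩, hwne⟩ := hw
    have h0 : G.dist v w = 0 := by omega
    exact hwne (by simp [(hreach.dist_eq_zero_iff.mp h0).symm])
  obtain ⟨e, heX⟩ := hXne
  have heinc : e ∈ G.incidenceSet v := hXsub heX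
  obtain ⟨x, rfl⟩ : ∃ x, e = s(v, x) := Sym2.mem_iff_exists.mp heinc.2
  have hadjx : G.Adj v x := heinc.1
  obtain ⟨f, hfinc, hfX⟩ : ∃ f, f ∈ G.incidenceSet v ∧ f ∉ X := by
    by_contra hc
    push_neg at hc
    exact hXprop (Set.Subset.antisymm hXsub fun f hf => hc f hf)
  obtain ⟨y, rfl⟩ : ∃ y, f = s(v, y) := Sym2.mem_iff_exists.mp hfinc.2
  have hadjy : G.Adj v y := hfinc.1
  -- well-definedness of parity of short walks
  have hC : ∀ (w : V) (Q Q' : G.Walk v w), Q.length ≤ r / 2 → Q'.length ≤ r / 2 →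
      (Odd (Q.edges.countP (· ∈ X)) ↔ Odd (Q'.edges.countP (· ∈ X))) := by
    intro w Q Q' hQ hQ'
    have hlen : (Q.append Q'.reverse).length ≤ r := by
      rw [SimpleGraph.Walk.length_append, SimpleGraph.Walk.length_reverse]
      omega
    have hev := hA v (Q.append Q'.reverse) hlen
    rw [SimpleGraph.Walk.edges_append, List.countP_append, SimpleGraph.Walk.edges_reverse,
      (List.reverse_perm Q'.edges).countP_eq] at hev
    rw [Nat.not_odd_iff_even, Nat.even_iff] at hev
    rw [Nat.odd_iff, Nat.odd_iff]
    omega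
  -- membership of neighbors in the punctured ball
  have hmemball : ∀ z : V, G.Adj v z → z ∈ (puncturedBall G r v).verts := by
    intro z hz
    rw [puncturedBall, SimpleGraph.Subgraph.deleteVerts_verts]
    refine ⟨⟨hz.reachable, ?_⟩, by simp [hz.ne']⟩
    have h1 : G.dist v z ≤ 1 := by
      simpa using SimpleGraph.dist_le (SimpleGraph.Walk.cons hz SimpleGraph.Walk.nil)
    omega
  -- parity transport along edges of the punctured ball
  have hD : ∀ w z : V, (puncturedBall G r v).Adj w z →
      ((∃ Q : G.Walk v w, Q.length ≤ r / 2 ∧ Odd (Q.edges.countP (· ∈ X))) ↔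
       (∃ Q : G.Walk v z, Q.length ≤ r / 2 ∧ Odd (Q.edges.countP (· ∈ X)))) := by
    intro w z hadj
    rw [puncturedBall, SimpleGraph.Subgraph.deleteVerts_adj] at hadj
    obtain ⟨-, hwv, -, hzv, hadj'⟩ := hadj
    obtain ⟨h1, ⟨hrw, hdw⟩, ⟨hrz, hdz⟩, hno⟩ :
        G.Adj w z ∧ (G.Reachable v w ∧ G.dist v w ≤ r / 2) ∧
          (G.Reachable v z ∧ G.dist v z ≤ r / 2) ∧
          ¬(Even r ∧ 2 * G.dist v w = r ∧ 2 * G.dist v z = r) := hadj'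
    obtain ⟨Qw, hQw⟩ := hrw.exists_walk_length_eq_dist
    obtain ⟨Qz, hQz⟩ := hrz.exists_walk_length_eq_dist
    have hlen : (Qw.append (SimpleGraph.Walk.cons h1 Qz.reverse)).length ≤ r := by
      rw [SimpleGraph.Walk.length_append, SimpleGraph.Walk.length_cons,
        SimpleGraph.Walk.length_reverse, hQw, hQz]
      rcases Nat.even_or_odd r with he | ho
      · have hne : ¬(2 * G.dist v w = r ∧ 2 * G.dist v z = r) := fun hx => hno ⟨he, hx⟩
        have h2 : r % 2 = 0 := Nat.even_iff.mp he
        omega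
      · have h2 : r % 2 = 1 := Nat.odd_iff.mp ho
        omega
    have hev := hA v _ hlen
    have hwzX : s(w, z) ∉ X := by
      intro hin
      have hv : v ∈ s(w, z) := (hXsub hin).2
      rw [Sym2.mem_iff] at hv
      rcases hv with rfl | rfl
      · exact hwv rfl
      · exact hzv rfl
    rw [SimpleGraph.Walk.edges_append, List.countP_append, SimpleGraph.Walk.edges_cons,
      List.countP_cons, SimpleGraph.Walk.edges_reverse,
      (List.reverse_perm Qz.edges).countP_eq] at hev
    simp only [hwzX, decide_false, Bool.false_eq_true, if_false, add_zero] at hev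
    rw [Nat.not_odd_iff_even, Nat.even_iff] at hev
    have hiff : Odd (Qw.edges.countP (· ∈ X)) ↔ Odd (Qz.edges.countP (· ∈ X)) := by
      rw [Nat.odd_iff, Nat.odd_iff]
      omega
    constructor
    · rintro ⟨Q, hQl, hQo⟩
      exact ⟨Qz, by omega, hiff.mp ((hC w Q Qw hQl (by omega)).mp hQo)⟩
    · rintro ⟨Q, hQl, hQo⟩
      exact ⟨Qw, by omega, hiff.mpr ((hC z Q Qz hQl (by omega)).mp hQo)⟩
  -- transport along a walk in the punctured ball
  have hstep : ∀ {a b : (puncturedBall G r v).verts}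
      (_ : (puncturedBall G r v).coe.Walk a b),
      ((∃ Q : G.Walk v a.1, Q.length ≤ r / 2 ∧ Odd (Q.edges.countP (· ∈ X))) ↔
       (∃ Q : G.Walk v b.1, Q.length ≤ r / 2 ∧ Odd (Q.edges.countP (· ∈ X)))) := by
    intro a b q
    induction q with
    | nil => exact Iff.rfl
    | cons hq q ih => exact (hD _ _ hq).trans ih
  obtain ⟨p⟩ := (hloc v) ⟨x, hmemball x hadjx⟩ ⟨y, hmemball y hadjy⟩
  have hparx : ∃ Q : G.Walk v x, Q.length ≤ r / 2 ∧ Odd (Q.edges.countP (· ∈ X)) := by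
    refine ⟨SimpleGraph.Walk.cons hadjx SimpleGraph.Walk.nil, by simp; omega, ?_⟩
    simp [List.countP_cons, heX]
  obtain ⟨Q, hQl, hQo⟩ := (hstep p).mp hparx
  have := (hC y Q (SimpleGraph.Walk.cons hadjy SimpleGraph.Walk.nil) hQl (by simp; omega)).mp hQo
  simp [List.countP_cons, hfX] at this
end

section
/- Let r ≥ 2 be a natural number and let G be a finite simple connected graph with at least 3 vertices such that for every vertex v the punctured ball at v (for parameter r) is connected (i.e., G has no r-local cutvertex). Then G is 2-connected; that is, for every vertex v of G, the graph G − v obtained by deleting v is connected. -/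
open SimpleGraph

lemma aux_walk_avoid {V : Type*} {G : SimpleGraph V} {H : G.Subgraph} {v : V}
    (hverts : ∀ w, w ≠ v → w ∈ H.verts)
    (hadj : ∀ {x y}, x ≠ v → y ≠ v → G.Adj x y → H.Adj x y)
    (hnbr : ∀ {x y} (hx : G.Adj v x) (hy : G.Adj v y),
      H.coe.Reachable ⟨x, hverts x hx.ne'⟩ ⟨y, hverts y hy.ne'⟩) :
    ∀ {x y : V} (hx : x ≠ v) (hy : y ≠ v), G.Walk x y →
      H.coe.Reachable ⟨x, hverts x hx⟩ ⟨y, hverts y hy⟩ := by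
  suffices h : ∀ (n : ℕ) {x y : V} (hx : x ≠ v) (hy : y ≠ v) (p : G.Walk x y),
      p.length = n → H.coe.Reachable ⟨x, hverts x hx⟩ ⟨y, hverts y hy⟩ by
    intro x y hx hy p; exact h p.length hx hy p rfl
  intro n
  induction n using Nat.strong_induction_on with
  | _ n ih =>
  intro x y hx hy p hn
  cases p with
  | nil => exact Reachable.refl _
  | @cons _ z _ h q =>
    by_cases hz : v = z
    · subst hz
      cases q with
      | nil => exact absurd rfl hy
      | @cons _ w _ h' q' =>
        have hw : w ≠ v := h'.ne'
        have r1 : H.coe.Reachable ⟨x, hverts x hx⟩ ⟨w, hverts w hw⟩ := hnbr h.symm h'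
        have r2 := ih q'.length (by simp [← hn, Walk.length_cons]) hw hy q' rfl
        exact r1.trans r2
    · have hz' : z ≠ v := Ne.symm hz
      have r1 : H.coe.Reachable ⟨x, hverts x hx⟩ ⟨z, hverts z hz'⟩ :=
        (Subgraph.Adj.coe (hadj hx hz' h)).reachable
      have r2 := ih q.length (by simp [← hn, Walk.length_cons]) hz' hy q rfl
      exact r1.trans r2

theorem two_connected_of_no_local_cutvertex
    {V : Type*} [Fintype V] [DecidableEq V] (r : ℕ) (hr : 2 ≤ r) (G : SimpleGraph V)
    (hG : G.Connected) (hcard : 3 ≤ Fintype.card V)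
    (hloc : ∀ v : V, (puncturedBall G r v).Connected) :
    ∀ v : V, ((⊤ : G.Subgraph).deleteVerts {v}).Connected := by
  intro v
  set H := ((⊤ : G.Subgraph).deleteVerts {v}) with hH
  have hverts : ∀ w, w ≠ v → w ∈ H.verts := fun w hw => ⟨trivial, by simp [hw]⟩
  have hadj : ∀ {x y : V}, x ≠ v → y ≠ v → G.Adj x y → H.Adj x y := by
    intro x y hx hy h
    exact ⟨⟨trivial, by simp [hx]⟩, ⟨trivial, by simp [hy]⟩, h⟩
  have hle : puncturedBall G r v ≤ H := by
    constructor
    · intro w hw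
      exact ⟨trivial, hw.2⟩
    · intro x y hxy
      obtain ⟨hx, hy, hadj'⟩ := hxy
      exact ⟨⟨trivial, hx.2⟩, ⟨trivial, hy.2⟩, hadj'.1⟩
  have hnbr : ∀ {x y : V} (hx : G.Adj v x) (hy : G.Adj v y),
      H.coe.Reachable ⟨x, hverts x hx.ne'⟩ ⟨y, hverts y hy.ne'⟩ := by
    intro x y hx hy
    have hmem : ∀ {w : V}, G.Adj v w → w ∈ (puncturedBall G r v).verts := by
      intro w hw
      refine ⟨⟨hw.reachable, ?_⟩, by simp [hw.ne']⟩
      have h1 : G.dist v w ≤ 1 := by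
        simpa using SimpleGraph.dist_le hw.toWalk
      omega
    have rPB := (hloc v).preconnected ⟨x, hmem hx⟩ ⟨y, hmem hy⟩
    exact rPB.map (SimpleGraph.Subgraph.inclusion hle)
  rw [Subgraph.connected_iff]
  constructor
  · rw [Subgraph.preconnected_iff]
    rintro ⟨x, hx⟩ ⟨y, hy⟩
    have hx' : x ≠ v := by simpa using hx.2
    have hy' : y ≠ v := by simpa using hy.2
    exact aux_walk_avoid hverts hadj hnbr hx' hy' (hG.preconnected x y).some
  · obtain ⟨w, hw⟩ := Fintype.exists_ne_of_one_lt_card (by omega) v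
    exact ⟨w, hverts w hw⟩
end

section
/- Let r be a natural number and let G be a finite simple graph. Then the characteristic vector of the edge set of every cycle of G of length at most r lies in the F_2-linear span of the characteristic vectors of the edge sets of the following cycles: (a) cycles of the form P ∪ P′, where P and P′ are two internally disjoint shortest paths in G between the same pair of distinct vertices u and w with 2·dist_G(u,w) ≤ r; and (b) cycles consisting of an edge e of G with endpoints x and y together with two internally disjoint shortest paths in G from a common vertex v to x and from v to y, where both paths have length d satisfying 2d + 1 ≤ r. -/
open SimpleGraph

/-- The characteristic vector (over `F₂`) of the edge set of a walk. -/
def walkChar {V : Type*} [DecidableEq V] {G : SimpleGraph V} {u : V} (c : G.Walk u u) :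
    Sym2 V → ZMod 2 :=
  fun e => if e ∈ c.edges then 1 else 0

/-- Cycles of type (a): the edge set of the cycle is `P ∪ P'` for two internally disjoint
shortest paths `P`, `P'` between the same pair of distinct vertices `a`, `b`
with `2 · dist(a,b) ≤ r`. -/
def IsTypeACycle {V : Type*} [DecidableEq V] (G : SimpleGraph V) (r : ℕ) {w : V}
    (d : G.Walk w w) : Prop :=
  ∃ (a b : V) (P P' : G.Walk a b), a ≠ b ∧ P.IsPath ∧ P'.IsPath ∧
    P.length = G.dist a b ∧ P'.length = G.dist a b ∧ 2 * G.dist a b ≤ r ∧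
    (∀ x, x ∈ P.support → x ∈ P'.support → x = a ∨ x = b) ∧
    d.edges.toFinset = P.edges.toFinset ∪ P'.edges.toFinset

/-- Cycles of type (b): the edge set of the cycle consists of an edge `xy` of `G` together
with two internally disjoint shortest paths from a common vertex `v` to `x` and to `y`,
both of the same length `ℓ` with `2ℓ + 1 ≤ r`. -/
def IsTypeBCycle {V : Type*} [DecidableEq V] (G : SimpleGraph V) (r : ℕ) {w : V}
    (d : G.Walk w w) : Prop :=
  ∃ (v x y : V) (P : G.Walk v x) (P' : G.Walk v y), G.Adj x y ∧
    P.IsPath ∧ P'.IsPath ∧ P.length = G.dist v x ∧ P'.length = G.dist v y ∧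
    P.length = P'.length ∧ 2 * P.length + 1 ≤ r ∧
    (∀ z, z ∈ P.support → z ∈ P'.support → z = v) ∧
    d.edges.toFinset = insert s(x, y) (P.edges.toFinset ∪ P'.edges.toFinset)

section Helpers

variable {V : Type*} [DecidableEq V] {G : SimpleGraph V}

/-- mod-2 edge-multiplicity vector of a walk -/
def parityChar {u v : V} (p : G.Walk u v) : Sym2 V → ZMod 2 :=
  fun e => (p.edges.count e : ZMod 2)

/-- The generating set from the theorem statement. -/
def genSet (G : SimpleGraph V) (r : ℕ) : Set (Sym2 V → ZMod 2) :=
  {f : Sym2 V → ZMod 2 | ∃ (w : V) (d : G.Walk w w), d.IsCycle ∧ f = walkChar d ∧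
    (IsTypeACycle G r d ∨ IsTypeBCycle G r d)}

lemma parityChar_nil {u : V} : parityChar (Walk.nil : G.Walk u u) = 0 := by
  funext e; simp [parityChar]

lemma parityChar_eq_walkChar {u : V} (c : G.Walk u u) (hc : c.edges.Nodup) :
    parityChar c = walkChar c := by
  funext e
  by_cases he : e ∈ c.edges
  · simp [parityChar, walkChar, he, List.count_eq_one_of_mem hc he]
  · simp [parityChar, walkChar, he, List.count_eq_zero_of_not_mem he]

lemma end_mem_support_tail {u v : V} (p : G.Walk u v) (hp : p.length ≠ 0) :
    v ∈ p.support.tail := by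
  cases p with
  | nil => simp at hp
  | cons h q => simpa using q.end_mem_support

lemma walk_split_at {u v : V} (p : G.Walk u v) (k : ℕ) (hk : k ≤ p.length) :
    ∃ (x : V) (A : G.Walk u x) (B : G.Walk x v), p = A.append B ∧ A.length = k := by
  induction k with
  | zero => exact ⟨u, Walk.nil, p, by simp, rfl⟩
  | succ m ih =>
    obtain ⟨x, A, B, hp, hA⟩ := ih (Nat.le_of_succ_le hk)
    have hB : B.length ≠ 0 := by
      have := congrArg Walk.length hp
      simp [Walk.length_append, hA] at this
      omega
    cases B with
    | nil => simp at hB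
    | cons hadj B' =>
      refine ⟨_, A.append (Walk.cons hadj Walk.nil), B', ?_, by simp [hA]⟩
      rw [hp, ← Walk.append_assoc]
      simp

lemma path_edge_endpoints {x u : V} (p : G.Walk x u) (hp : p.IsPath)
    (he : s(x, u) ∈ p.edges) : p.length = 1 := by
  cases p with
  | nil => simp at he
  | cons h q =>
    rw [Walk.edges_cons, List.mem_cons] at he
    rcases he with he | he
    · rw [Sym2.eq_iff] at he
      rcases he with ⟨-, hu⟩ | ⟨hx, -⟩
      · subst hu
        have hq : q = Walk.nil :=
          Walk.isPath_iff_eq_nil.mp ((Walk.cons_isPath_iff _ _).mp hp).1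
        subst hq; rfl
      · exact absurd hx h.ne
    · exact absurd (Walk.fst_mem_support_of_mem_edges q he)
        ((Walk.cons_isPath_iff _ _).mp hp).2

lemma shortcut_pieces {u z : V} (A : G.Walk u z) (B : G.Walk z u) :
    ∃ (W1 W2 : G.Walk u u), W1.length = A.length + G.dist u z ∧
      W2.length = G.dist u z + B.length ∧
      parityChar (A.append B) = parityChar W1 + parityChar W2 := by
  obtain ⟨S, hS⟩ := A.reachable.exists_walk_length_eq_dist
  refine ⟨A.append S.reverse, S.append B,
    by simp [Walk.length_append, hS], by simp [Walk.length_append, hS], ?_⟩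
  funext e
  simp only [parityChar, Walk.edges_append, Walk.edges_reverse, List.count_append,
    List.count_reverse, Nat.cast_add, Pi.add_apply]
  have h2 : ((List.count e S.edges : ℕ) : ZMod 2) + (List.count e S.edges : ℕ) = 0 := by
    rw [← two_mul]
    have : (2 : ZMod 2) = 0 := by decide
    rw [this, zero_mul]
  linear_combination -h2

lemma split_second {v u : V} (B : G.Walk v u) (hvB : v ∈ B.support.tail) :
    ∃ (C : G.Walk v v) (E : G.Walk v u), B = C.append E ∧ C.length ≠ 0 := by
  cases B with
  | nil => simp at hvB
  | cons h₂ B₃ =>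
    have hv₃ : v ∈ B₃.support := by simpa using hvB
    exact ⟨Walk.cons h₂ (B₃.takeUntil v hv₃), B₃.dropUntil v hv₃,
      by rw [Walk.cons_append, B₃.take_spec hv₃], by simp⟩

lemma cycle_case (r : ℕ) {u : V} (W : G.Walk u u) (hcyc : W.IsCycle) (hWr : W.length ≤ r)
    (IH : ∀ (w : V) (W' : G.Walk w w), W'.length < W.length →
      parityChar W' ∈ Submodule.span (ZMod 2) (genSet G r)) :
    parityChar W ∈ Submodule.span (ZMod 2) (genSet G r) := by
  have h3 : 3 ≤ W.length := hcyc.three_le_length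
  obtain ⟨z, A, B, hsplit, hA⟩ := walk_split_at W (W.length / 2) (Nat.div_le_self _ _)
  have hlen : W.length = A.length + B.length := by rw [hsplit, Walk.length_append]
  have hAne : A.length ≠ 0 := by omega
  have hBne : B.length ≠ 0 := by omega
  have hsup : W.support.tail = A.support.tail ++ B.support.tail := by
    rw [hsplit, Walk.support_append, A.support_eq_cons]
    rfl
  have hnd := hcyc.support_nodup
  rw [hsup] at hnd
  have hdisj : ∀ a, a ∈ A.support.tail → a ∈ B.support.tail → False :=
    fun a ha hb => (List.nodup_append'.mp hnd).2.2 ha hb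
  have hndA : A.support.tail.Nodup := (List.nodup_append'.mp hnd).1
  have hndB : B.support.tail.Nodup := (List.nodup_append'.mp hnd).2.1
  have huB : u ∈ B.support.tail := end_mem_support_tail B hBne
  have huA : u ∉ A.support.tail := fun h' => hdisj u h' huB
  have hApath : A.IsPath := by
    rw [Walk.isPath_def, A.support_eq_cons]; exact List.nodup_cons.mpr ⟨huA, hndA⟩
  have hzA : z ∈ A.support.tail := end_mem_support_tail A hAne
  have hzu : z ≠ u := fun h' => huA (h' ▸ hzA)
  have hzB : z ∉ B.support.tail := fun h' => hdisj z hzA h'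
  have hBpath : B.IsPath := by
    rw [Walk.isPath_def, B.support_eq_cons]; exact List.nodup_cons.mpr ⟨hzB, hndB⟩
  have hdzA : G.dist u z ≤ A.length := SimpleGraph.dist_le A
  by_cases hshort : G.dist u z < W.length / 2
  · obtain ⟨W1, W2, h1, h2, hpar⟩ := shortcut_pieces A B
    rw [hsplit, hpar]
    exact add_mem (IH _ W1 (by omega)) (IH _ W2 (by omega))
  · have hdz : G.dist u z = W.length / 2 := le_antisymm (hA ▸ hdzA) (not_lt.mp hshort)
    rcases Nat.even_or_odd W.length with heven | hodd
    · -- even case: type A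
      obtain ⟨k, hk⟩ := heven
      have hBlen : B.length = W.length / 2 := by omega
      refine Submodule.subset_span
        ⟨u, W, hcyc, (parityChar_eq_walkChar W hcyc.isCircuit.isTrail.edges_nodup).symm ▸ rfl,
          Or.inl ⟨u, z, A, B.reverse, Ne.symm hzu, hApath, hBpath.reverse, ?_, ?_, ?_, ?_, ?_⟩⟩
      · omega
      · rw [Walk.length_reverse]; omega
      · omega
      · intro t htA htB
        rw [Walk.support_reverse, List.mem_reverse, B.support_eq_cons, List.mem_cons] at htB
        rw [A.support_eq_cons, List.mem_cons] at htA
        rcases htA with rfl | htA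
        · exact Or.inl rfl
        rcases htB with rfl | htB
        · exact Or.inr rfl
        exact (hdisj t htA htB).elim
      · rw [hsplit, Walk.edges_append, Walk.edges_reverse, List.toFinset_append,
          List.toFinset_reverse]
    · -- odd case
      obtain ⟨k, hk⟩ := hodd
      have hAk : A.length = k := by omega
      have hBk : B.length = k + 1 := by omega
      cases B with
      | nil => simp at hBne
      | @cons _ y _ h₂ B₃ =>
        have hB₃k : B₃.length = k := by
          simp only [Walk.length_cons] at hBk; omega
        have hdy_le : G.dist u y ≤ k := by
          have := SimpleGraph.dist_le B₃.reverse
          rwa [Walk.length_reverse, hB₃k] at this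
        by_cases hshort2 : G.dist u y < k
        · -- shortcut at y
          have hassoc : (A.append (Walk.cons h₂ Walk.nil)).append B₃
              = A.append (Walk.cons h₂ B₃) := by
            rw [← Walk.append_assoc, Walk.cons_append, Walk.nil_append]
          have hW2 : W = (A.append (Walk.cons h₂ Walk.nil)).append B₃ :=
            hsplit.trans hassoc.symm
          obtain ⟨W1, W2, h1, h2, hpar⟩ :=
            shortcut_pieces (A.append (Walk.cons h₂ Walk.nil)) B₃
          rw [hW2, hpar]
          have hA2len : (A.append (Walk.cons h₂ Walk.nil)).length = k + 1 := by
            simp [Walk.length_append, hAk]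
          exact add_mem (IH _ W1 (by omega)) (IH _ W2 (by omega))
        · have hdy : G.dist u y = k := le_antisymm hdy_le (not_lt.mp hshort2)
          have hsupB : (Walk.cons h₂ B₃).support.tail = B₃.support := by simp
          rw [hsupB] at hnd hdisj huB hzB
          have hndB₃ : B₃.support.Nodup := (List.nodup_append'.mp hnd).2.1
          have hB₃path : B₃.IsPath := (Walk.isPath_def B₃).mpr hndB₃
          refine Submodule.subset_span
            ⟨u, W, hcyc,
              (parityChar_eq_walkChar W hcyc.isCircuit.isTrail.edges_nodup).symm ▸ rfl,
              Or.inr ⟨u, z, y, A, B₃.reverse, h₂, hApath, hB₃path.reverse, ?_, ?_, ?_, ?_, ?_,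
                ?_⟩⟩
          · omega
          · rw [Walk.length_reverse]; omega
          · rw [Walk.length_reverse]; omega
          · omega
          · intro t htA htB
            rw [Walk.support_reverse, List.mem_reverse] at htB
            rw [A.support_eq_cons, List.mem_cons] at htA
            rcases htA with rfl | htA
            · rfl
            exact (hdisj t htA htB).elim
          · rw [hsplit, Walk.edges_append, Walk.edges_cons, Walk.edges_reverse,
              List.toFinset_append, List.toFinset_cons, List.toFinset_reverse,
              Finset.union_insert]

end Helpers

section Main

variable {V : Type*} [DecidableEq V] {G : SimpleGraph V}

lemma main_parity (r : ℕ) :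
    ∀ (n : ℕ) (u : V) (W : G.Walk u u), W.length ≤ n → W.length ≤ r →
      parityChar W ∈ Submodule.span (ZMod 2) (genSet G r) := by
  intro n
  induction n using Nat.strong_induction_on with
  | _ n IHn =>
    intro u W hWn hWr
    cases W with
    | nil => rw [parityChar_nil]; exact zero_mem _
    | @cons _ x _ h W₂ =>
      by_cases hnd : W₂.support.Nodup
      · by_cases he : s(u, x) ∈ W₂.edges
        · -- W is the walk u-x-u; its parity vector is zero
          have hpath : W₂.IsPath := (Walk.isPath_def W₂).mpr hnd
          have he' : s(x, u) ∈ W₂.edges := by rw [Sym2.eq_swap]; exact he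
          have hlen1 : W₂.length = 1 := path_edge_endpoints W₂ hpath he'
          cases W₂ with
          | nil => simp at hlen1
          | @cons _ y _ h₂ q =>
            cases q with
            | nil =>
              have hzero : parityChar (Walk.cons h (Walk.cons h₂ Walk.nil)) = 0 := by
                funext e
                simp only [parityChar, Walk.edges_cons, Walk.edges_nil]
                have hxy : s(x, u) = s(u, x) := Sym2.eq_swap
                rw [hxy]
                by_cases hce : e = s(u, x)
                · subst hce; simp [List.count_cons]; decide
                · simp [List.count_cons, Ne.symm hce]
              rw [hzero]; exact zero_mem _
            | cons h₃ q' => simp [Walk.length_cons] at hlen1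
        · -- W is a cycle
          have htrail : (Walk.cons h W₂).IsTrail := by
            constructor
            rw [Walk.edges_cons]
            exact List.nodup_cons.mpr
              ⟨he, ((Walk.isPath_def W₂).mpr hnd).isTrail.edges_nodup⟩
          have hcyc : (Walk.cons h W₂).IsCycle :=
            ⟨⟨htrail, by simp⟩, by simpa using hnd⟩
          exact cycle_case r _ hcyc hWr (fun w W' hlt =>
            IHn W'.length (lt_of_lt_of_le hlt hWn) w W' le_rfl
              (le_trans hlt.le hWr))
      · -- there is a repeated vertex: decompose into two shorter closed walks
        obtain ⟨v, hv⟩ := List.exists_duplicate_iff_not_nodup.mpr hnd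
        have hv1 : v ∈ W₂.support := hv.mem
        have hc2 : 2 ≤ W₂.support.count v := List.duplicate_iff_two_le_count.mp hv
        have hspec := W₂.take_spec hv1
        have hcount1 : (W₂.takeUntil v hv1).support.count v = 1 :=
          W₂.count_support_takeUntil_eq_one hv1
        have hsupp : W₂.support
            = (W₂.takeUntil v hv1).support ++ (W₂.dropUntil v hv1).support.tail := by
          conv_lhs => rw [← hspec]
          rw [Walk.support_append]
        have hvB : v ∈ (W₂.dropUntil v hv1).support.tail := by
          by_contra hvB
          rw [hsupp, List.count_append, hcount1, List.count_eq_zero_of_not_mem hvB] at hc2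
          omega
        obtain ⟨C, E, hBCE, hClen⟩ := split_second _ hvB
        have hW₂edges : W₂.edges = (W₂.takeUntil v hv1).edges ++ (C.edges ++ E.edges) := by
          conv_lhs => rw [← hspec]
          rw [Walk.edges_append, hBCE, Walk.edges_append]
        have hpar : parityChar (Walk.cons h W₂)
            = parityChar C + parityChar ((Walk.cons h (W₂.takeUntil v hv1)).append E) := by
          funext e
          simp only [parityChar, Walk.edges_cons, Walk.edges_append, hW₂edges,
            List.count_append, List.count_cons, Nat.cast_add, Pi.add_apply]
          push_cast
          ring
        have hlen2 : W₂.length = (W₂.takeUntil v hv1).length + (C.length + E.length) := by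
          conv_lhs => rw [← hspec]
          rw [Walk.length_append, hBCE, Walk.length_append]
        rw [hpar]
        have l1 : C.length < (Walk.cons h W₂).length := by
          rw [Walk.length_cons]; omega
        have l2 : ((Walk.cons h (W₂.takeUntil v hv1)).append E).length
            < (Walk.cons h W₂).length := by
          rw [Walk.length_append, Walk.length_cons, Walk.length_cons]; omega
        exact add_mem
          (IHn C.length (lt_of_lt_of_le l1 hWn) _ C le_rfl
            (lt_of_lt_of_le l1 hWr).le)
          (IHn _ (lt_of_lt_of_le l2 hWn) _ _ le_rfl (lt_of_lt_of_le l2 hWr).le)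

end Main

theorem cycle_in_span_of_special_cycles
    {V : Type*} [Fintype V] [DecidableEq V] (r : ℕ) (G : SimpleGraph V)
    (u : V) (c : G.Walk u u) (hc : c.IsCycle) (hlen : c.length ≤ r) :
    walkChar c ∈ Submodule.span (ZMod 2)
      {f : Sym2 V → ZMod 2 | ∃ (w : V) (d : G.Walk w w), d.IsCycle ∧ f = walkChar d ∧
        (IsTypeACycle G r d ∨ IsTypeBCycle G r d)} := by
  rw [← parityChar_eq_walkChar c hc.isCircuit.isTrail.edges_nodup]
  exact main_parity r c.length u c le_rfl hlen
end

section
/- Let G be a finite simple 2-connected graph (G has at least 3 vertices and G − v is connected for every vertex v). Then for every vertex v of G and every nonempty proper subset X of the set of edges of G incident with v, there is a cycle of G whose edge set contains exactly one edge of X. -/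
open SimpleGraph

theorem exists_cycle_meeting_exactly_once
    {V : Type*} [Fintype V] [DecidableEq V] (G : SimpleGraph V)
    (hcard : 3 ≤ Fintype.card V)
    (h2 : ∀ v : V, ((⊤ : G.Subgraph).deleteVerts {v}).Connected) :
    ∀ (v : V) (X : Finset (Sym2 V)), ↑X ⊆ G.incidenceSet v → X.Nonempty →
      ↑X ≠ G.incidenceSet v →
      ∃ (u : V) (c : G.Walk u u), c.IsCycle ∧ (X ∩ c.edges.toFinset).card = 1 := by
  intro v X hXsub hXne hXprop
  obtain ⟨e, heX⟩ := hXne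
  have heI : e ∈ G.incidenceSet v := hXsub heX
  obtain ⟨hee, hve⟩ := heI
  obtain ⟨a, rfl⟩ : ∃ a, e = s(v, a) := ⟨Sym2.Mem.other hve, (Sym2.other_spec hve).symm⟩
  have hva : G.Adj v a := hee
  have hfex : ∃ f ∈ G.incidenceSet v, f ∉ X := by
    by_contra h
    push_neg at h
    exact hXprop (Set.Subset.antisymm hXsub (fun f hf => h f hf))
  obtain ⟨f, hfI, hfX⟩ := hfex
  obtain ⟨hfe, hvf⟩ := hfI
  obtain ⟨b, rfl⟩ : ∃ b, f = s(v, b) := ⟨Sym2.Mem.other hvf, (Sym2.other_spec hvf).symm⟩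
  have hvb : G.Adj v b := hfe
  have hab : a ≠ b := by rintro rfl; exact hfX heX
  set H := (⊤ : G.Subgraph).deleteVerts {v} with hH
  have ha : a ∈ H.verts := ⟨Set.mem_univ a, by simp [hva.ne']⟩
  have hb : b ∈ H.verts := ⟨Set.mem_univ b, by simp [hvb.ne']⟩
  obtain ⟨w⟩ := h2 v ⟨a, ha⟩ ⟨b, hb⟩
  classical
  let p : G.Walk a b := (w.toPath : H.coe.Path _ _).val.map H.hom
  have hp : p.IsPath :=
    Walk.map_isPath_of_injective Subtype.val_injective (w.toPath : H.coe.Path _ _).prop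
  have hvp : v ∉ p.support := by
    intro hmem
    rw [show p.support = _ from Walk.support_map _ _] at hmem
    obtain ⟨x, hx, hxv⟩ := List.mem_map.mp hmem
    exact x.2.2 (by simpa using hxv)
  let q : G.Walk a v := p.append (Walk.cons hvb.symm Walk.nil)
  have hqsupp : q.support = p.support ++ [v] := by
    simp [q, Walk.support_append]
  have hqpath : q.IsPath := by
    rw [Walk.isPath_def, hqsupp, List.nodup_append]
    exact ⟨hp.support_nodup, List.nodup_singleton v,
      fun x hx y hy => by simp at hy; subst hy; rintro rfl; exact hvp hx⟩
  have hqedges : q.edges = p.edges ++ [s(b, v)] := by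
    simp [q, Walk.edges_append]
  have hnotin : s(v, a) ∉ q.edges := by
    rw [hqedges]
    intro hmem
    rcases List.mem_append.mp hmem with h | h
    · exact hvp (Walk.fst_mem_support_of_mem_edges p h)
    · simp at h
      rcases h with ⟨rfl, rfl⟩ | rfl
      · exact hva.ne rfl
      · exact hab rfl
  refine ⟨v, Walk.cons hva q, (Walk.cons_isCycle_iff q hva).mpr ⟨hqpath, hnotin⟩, ?_⟩
  have hkey : X ∩ (Walk.cons hva q).edges.toFinset = {s(v, a)} := by
    ext x
    simp only [Finset.mem_inter, List.mem_toFinset, Walk.edges_cons, hqedges,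
      Finset.mem_singleton, List.mem_cons, List.mem_append, List.mem_singleton]
    constructor
    · rintro ⟨hxX, hx | hx | hx⟩
      · exact hx
      · exfalso
        have hvx : v ∈ x := (hXsub hxX).2
        revert hx
        induction x using Sym2.ind with
        | _ c d =>
          intro hx
          rcases Sym2.mem_iff.mp hvx with rfl | rfl
          · exact hvp (Walk.fst_mem_support_of_mem_edges p hx)
          · exact hvp (Walk.snd_mem_support_of_mem_edges p hx)
      · rcases hx with rfl | hx
        · exact absurd (by rwa [Sym2.eq_swap] at hxX) hfX
        · simp at hx
    · rintro rfl
      exact ⟨heX, Or.inl rfl⟩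
  rw [hkey]
  exact Finset.card_singleton _
end
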